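/- Let k ≥ 3, let G = (V,E) be a finite simple graph, and let c : S → [k] be a partial coloring of G. Define the graph G' on the vertex set V ⊔ E ⊔ (V × {1,2,3}) in which: each vertex e of the E-part is adjacent exactly to the two endpoints of e in the V-part; each x ∈ V is additionally adjacent to (x,1) and (x,3); and (x,1)-(x,2)-(x,3) is a path for each x ∈ V; there are no other edges. Let c' be the partial coloring of G' that assigns c(x) to the copy of each x ∈ S, assigns colors 1, 2, 3 to (x,1), (x,2), (x,3) respectively for every x ∈ V, and leaves the remaining vertices uncolored. Then G' is bipartite, and for every natural number ℓ: there exists an extension of c to a full k-coloring of G making at least ℓ edges of G happy if and only if there exists an extension of c' to a full k-coloring of G' making at least ℓ vertices of G' happy. -/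

import Mathlib

open Finset
open scoped Classical

/-- The number of happy edges of a graph `G` under a full coloring `c`. -/
noncomputable def happyEdgeCount {V : Type*} [Fintype V] {k : ℕ}
    (G : SimpleGraph V) (c : V → Fin k) : ℕ :=
  (G.edgeFinset.filter (fun e => ∀ x ∈ e, ∀ y ∈ e, c x = c y)).card

/-- The number of happy vertices of a graph `G` under a full coloring `c`. -/
noncomputable def happyVertexCount {V : Type*} [Fintype V] {k : ℕ}
    (G : SimpleGraph V) (c : V → Fin k) : ℕ :=
  (Finset.univ.filter (fun v => ∀ u, G.Adj v u → c u = c v)).card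

/-- The graph `G'` on `V ⊔ E ⊔ (V × {1,2,3})` (here `V × Fin 3`, with `0,1,2` playing the roles
of `1,2,3`): each edge-vertex is adjacent exactly to its two endpoints in the `V`-part; each
`x ∈ V` is additionally adjacent to `(x,1)` and `(x,3)`; and `(x,1)-(x,2)-(x,3)` is a path for
each `x ∈ V`; there are no other edges. -/
def bipGraphOf {V : Type*} (G : SimpleGraph V) :
    SimpleGraph (V ⊕ (↥G.edgeSet ⊕ V × Fin 3)) :=
  SimpleGraph.fromRel (fun a b =>
    match a, b with
    | Sum.inl u, Sum.inr (Sum.inl e) => u ∈ (e : Sym2 V)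
    | Sum.inl u, Sum.inr (Sum.inr (x, j)) => u = x ∧ (j = 0 ∨ j = 2)
    | Sum.inr (Sum.inr (x, j)), Sum.inr (Sum.inr (y, j')) =>
        x = y ∧ ((j = 0 ∧ j' = 1) ∨ (j = 1 ∧ j' = 2))
    | _, _ => False)

section aux
variable {V : Type*} {G : SimpleGraph V}

lemma adj_inl_edge {u : V} {e : G.edgeSet} :
    (bipGraphOf G).Adj (Sum.inl u) (Sum.inr (Sum.inl e)) ↔ u ∈ (e : Sym2 V) := by
  simp [bipGraphOf, SimpleGraph.fromRel_adj]

lemma adj_inl_path {u x : V} {j : Fin 3} :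
    (bipGraphOf G).Adj (Sum.inl u) (Sum.inr (Sum.inr (x, j))) ↔ u = x ∧ (j = 0 ∨ j = 2) := by
  simp [bipGraphOf, SimpleGraph.fromRel_adj]

lemma adj_path_path {x y : V} {j j' : Fin 3} :
    (bipGraphOf G).Adj (Sum.inr (Sum.inr (x, j))) (Sum.inr (Sum.inr (y, j'))) ↔
      x = y ∧ ((j = 0 ∧ j' = 1) ∨ (j = 1 ∧ j' = 2) ∨ (j = 1 ∧ j' = 0) ∨ (j = 2 ∧ j' = 1)) := by
  simp only [bipGraphOf, SimpleGraph.fromRel_adj, ne_eq, Sum.inr.injEq, Prod.mk.injEq, not_and]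
  constructor
  · rintro ⟨hne, (⟨h, h2⟩ | ⟨h, h2⟩)⟩
    · exact ⟨h, by tauto⟩
    · exact ⟨h.symm, by tauto⟩
  · rintro ⟨rfl, h⟩
    refine ⟨fun _ => ?_, ?_⟩
    · rcases h with ⟨h1,h2⟩|⟨h1,h2⟩|⟨h1,h2⟩|⟨h1,h2⟩ <;> subst h1 <;> subst h2 <;> decide
    · tauto

lemma adj_edge_any {e : G.edgeSet} {u} :
    (bipGraphOf G).Adj (Sum.inr (Sum.inl e)) u ↔ ∃ x, u = Sum.inl x ∧ x ∈ (e : Sym2 V) := by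
  rcases u with x | (f | ⟨x, j⟩) <;> simp [bipGraphOf, SimpleGraph.fromRel_adj]

/-- classification of happy vertices of `bipGraphOf G` under a constrained coloring -/
lemma happy_is_edge [Fintype V] {k : ℕ} (hk : 3 ≤ k)
    (c₂ : V ⊕ (↥G.edgeSet ⊕ V × Fin 3) → Fin k)
    (h2 : ∀ x j, c₂ (Sum.inr (Sum.inr (x, j))) = Fin.castLE hk j)
    (v : V ⊕ (↥G.edgeSet ⊕ V × Fin 3))
    (hv : ∀ u, (bipGraphOf G).Adj v u → c₂ u = c₂ v) :
    ∃ e : G.edgeSet, v = Sum.inr (Sum.inl e) := by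
  have castinj : ∀ j j' : Fin 3, Fin.castLE hk j = Fin.castLE hk j' → j = j' := by
    intro j j' h
    have := congrArg Fin.val h
    simpa [Fin.ext_iff] using this
  rcases v with x | (e | ⟨x, j⟩)
  · exfalso
    have h0 := hv (Sum.inr (Sum.inr (x, 0))) (adj_inl_path.mpr ⟨rfl, Or.inl rfl⟩)
    have h2' := hv (Sum.inr (Sum.inr (x, 2))) (adj_inl_path.mpr ⟨rfl, Or.inr rfl⟩)
    rw [h2] at h0 h2'
    have : (0 : Fin 3) = 2 := castinj _ _ (h0.trans h2'.symm)
    exact absurd this (by decide)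
  · exact ⟨e, rfl⟩
  · exfalso
    fin_cases j
    · have h01 := hv (Sum.inr (Sum.inr (x, 1))) (adj_path_path.mpr ⟨rfl, by tauto⟩)
      rw [h2, h2] at h01
      exact absurd (castinj _ _ h01) (by decide)
    · have h01 := hv (Sum.inr (Sum.inr (x, 0))) (adj_path_path.mpr ⟨rfl, by tauto⟩)
      rw [h2, h2] at h01
      exact absurd (castinj _ _ h01) (by decide)
    · have h01 := hv (Sum.inr (Sum.inr (x, 1))) (adj_path_path.mpr ⟨rfl, by tauto⟩)
      rw [h2, h2] at h01
      exact absurd (castinj _ _ h01) (by decide)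

lemma backward [Fintype V] {k : ℕ} (hk : 3 ≤ k)
    (c₂ : V ⊕ (↥G.edgeSet ⊕ V × Fin 3) → Fin k)
    (h2 : ∀ x j, c₂ (Sum.inr (Sum.inr (x, j))) = Fin.castLE hk j) :
    happyVertexCount (bipGraphOf G) c₂ ≤ happyEdgeCount G (fun x => c₂ (Sum.inl x)) := by
  classical
  apply Finset.card_le_card_of_injOn (fun v =>
    match v with
    | Sum.inr (Sum.inl e) => (e : Sym2 V)
    | Sum.inl x => s(x, x)
    | Sum.inr (Sum.inr (x, _)) => s(x, x))
  · intro v hv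
    simp only [Finset.coe_filter, Set.mem_setOf_eq, Finset.mem_univ, true_and] at hv
    obtain ⟨e, rfl⟩ := happy_is_edge hk c₂ h2 v hv
    simp only [Finset.mem_coe, Finset.mem_filter, SimpleGraph.mem_edgeFinset]
    refine ⟨e.2, ?_⟩
    intro x hx y hy
    have hx' := hv (Sum.inl x) (((bipGraphOf G).adj_comm _ _).mp (adj_inl_edge.mpr hx))
    have hy' := hv (Sum.inl y) (((bipGraphOf G).adj_comm _ _).mp (adj_inl_edge.mpr hy))
    exact hx'.trans hy'.symm
  · intro v₁ hv₁ v₂ hv₂ hf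
    simp only [Finset.coe_filter, Set.mem_setOf_eq, Finset.mem_univ, true_and] at hv₁ hv₂
    obtain ⟨e₁, rfl⟩ := happy_is_edge hk c₂ h2 v₁ hv₁
    obtain ⟨e₂, rfl⟩ := happy_is_edge hk c₂ h2 v₂ hv₂
    simp only at hf
    exact congrArg (fun e => Sum.inr (Sum.inl e)) (Subtype.ext hf)

lemma forward [Fintype V] {k : ℕ} (hk : 3 ≤ k) (c₁ : V → Fin k) :
    ∃ c₂ : V ⊕ (↥G.edgeSet ⊕ V × Fin 3) → Fin k,
      (∀ x, c₂ (Sum.inl x) = c₁ x) ∧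
      (∀ x j, c₂ (Sum.inr (Sum.inr (x, j))) = Fin.castLE hk j) ∧
      happyEdgeCount G c₁ ≤ happyVertexCount (bipGraphOf G) c₂ := by
  classical
  set c₂ : V ⊕ (↥G.edgeSet ⊕ V × Fin 3) → Fin k := fun v =>
    match v with
    | Sum.inl x => c₁ x
    | Sum.inr (Sum.inl e) => c₁ (Quot.out (e : Sym2 V)).1
    | Sum.inr (Sum.inr (_, j)) => Fin.castLE hk j with hc₂
  refine ⟨c₂, fun x => rfl, fun x j => rfl, ?_⟩
  apply le_of_eq
  apply Finset.card_bij (fun e he => Sum.inr (Sum.inl ⟨e,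
    SimpleGraph.mem_edgeFinset.mp (Finset.mem_of_mem_filter e he)⟩))
  · intro e he
    simp only [Finset.mem_filter, SimpleGraph.mem_edgeFinset] at he
    simp only [Finset.mem_filter, Finset.mem_univ, true_and]
    intro u hu
    rw [adj_edge_any] at hu
    obtain ⟨x, rfl, hx⟩ := hu
    exact he.2 x hx _ (Sym2.out_fst_mem e)
  · intro e₁ h₁ e₂ h₂ h
    simpa using h
  · intro b hb
    simp only [Finset.mem_filter, Finset.mem_univ, true_and] at hb
    obtain ⟨e, rfl⟩ := happy_is_edge hk c₂ (fun x j => rfl) b hb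
    refine ⟨(e : Sym2 V), ?_, by simp⟩
    simp only [Finset.mem_filter, SimpleGraph.mem_edgeFinset]
    refine ⟨e.2, ?_⟩
    intro x hx y hy
    have hx' := hb (Sum.inl x) (((bipGraphOf G).adj_comm _ _).mp (adj_inl_edge.mpr hx))
    have hy' := hb (Sum.inl y) (((bipGraphOf G).adj_comm _ _).mp (adj_inl_edge.mpr hy))
    exact hx'.trans hy'.symm

end aux


/-- For `k ≥ 3` and a partial coloring `c : S → [k]` of `G`, the graph `G'`
with the cherry gadgets (its path vertices `(x,1),(x,2),(x,3)` precolored with the three colors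
`1,2,3`) is bipartite, and for every `ℓ`: `c` extends to a full coloring of `G` with at least
`ℓ` happy edges iff the partial coloring `c'` of `G'` extends to a full coloring of `G'` with at
least `ℓ` happy vertices. -/
theorem stmt4 {V : Type*} [Fintype V] (k : ℕ) (hk : 3 ≤ k)
    (G : SimpleGraph V) (S : Finset V) (c : V → Fin k) :
    (∃ A : Set (V ⊕ (↥G.edgeSet ⊕ V × Fin 3)),
      ∀ a b, (bipGraphOf G).Adj a b → ((a ∈ A ∧ b ∉ A) ∨ (a ∉ A ∧ b ∈ A))) ∧
    ∀ ℓ : ℕ,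
      ((∃ c₁ : V → Fin k, (∀ x ∈ S, c₁ x = c x) ∧ ℓ ≤ happyEdgeCount G c₁) ↔
      (∃ c₂ : V ⊕ (↥G.edgeSet ⊕ V × Fin 3) → Fin k,
        (∀ x ∈ S, c₂ (Sum.inl x) = c x) ∧
        (∀ x : V, ∀ j : Fin 3, c₂ (Sum.inr (Sum.inr (x, j))) = Fin.castLE hk j) ∧
        ℓ ≤ happyVertexCount (bipGraphOf G) c₂)) := by
  constructor
  · refine ⟨{a | match a with
      | Sum.inl _ => True
      | Sum.inr (Sum.inr (_, j)) => j = 1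
      | _ => False}, ?_⟩
    intro a b hab
    rcases a with x | (e | ⟨x, j⟩) <;> rcases b with y | (f | ⟨y, j'⟩)
    · exact absurd hab (by simp [bipGraphOf, SimpleGraph.fromRel_adj])
    · left; exact ⟨trivial, by simp [Set.mem_setOf_eq]⟩
    · rw [adj_inl_path] at hab
      left
      refine ⟨trivial, ?_⟩
      simp only [Set.mem_setOf_eq]
      rcases hab.2 with h | h <;> simp [h]
    · right; exact ⟨by simp [Set.mem_setOf_eq], trivial⟩
    · exact absurd hab (by simp [bipGraphOf, SimpleGraph.fromRel_adj])
    · exact absurd hab (by simp [bipGraphOf, SimpleGraph.fromRel_adj])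
    · rw [(bipGraphOf G).adj_comm, adj_inl_path] at hab
      right
      refine ⟨?_, trivial⟩
      simp only [Set.mem_setOf_eq]
      rcases hab.2 with h | h <;> simp [h]
    · exact absurd hab (by simp [bipGraphOf, SimpleGraph.fromRel_adj])
    · rw [adj_path_path] at hab
      simp only [Set.mem_setOf_eq]
      rcases hab.2 with ⟨h1, h2⟩ | ⟨h1, h2⟩ | ⟨h1, h2⟩ | ⟨h1, h2⟩ <;> subst h1 <;> subst h2 <;>
        simp
  · intro ℓ
    constructor
    · rintro ⟨c₁, hS, hcount⟩
      obtain ⟨c₂, hc1, hc2, hle⟩ := forward (G := G) hk c₁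
      exact ⟨c₂, fun x hx => (hc1 x).trans (hS x hx), hc2, hcount.trans hle⟩
    · rintro ⟨c₂, hS, hc2, hcount⟩
      exact ⟨fun x => c₂ (Sum.inl x), hS, hcount.trans (backward hk c₂ hc2)⟩
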